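/- arXiv:1008.1098 — 5 statements merged into one kernel-verified Lean document; each statement's English description precedes it below -/
import Mathlib

section
/- Let S be a real Banach space, Q a finite-dimensional real normed vector space, and F : Q → S → (S →L[ℝ] Q) a continuous map such that for constants K, L > 0 one has ‖F(q,s)(v)‖ ≤ K‖s‖‖v‖ and ‖(F(q₁,s) − F(q₂,s))(v)‖ ≤ L‖q₁ − q₂‖‖s‖‖v‖ for all q, q₁, q₂ ∈ Q and s, v ∈ S. Then for every C¹ function s : [0,∞) → S and every q₀ ∈ Q there exists a unique C¹ function q : [0,∞) → Q with q(0) = q₀ and q'(t) = F(q(t), s(t))(s'(t)) for all t ≥ 0. -/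
open Set

/-- **Existence and uniqueness of trajectories of a linear swimmer.**
`S` is the (Banach) shape space, `Q` the finite-dimensional position space (a chart of the
position manifold), and `F` the datum of the linear dynamics `q' = F(q,s)(s')`.
Given a `C¹` shape function `s : [0,∞) → S` and an initial position `q₀`, there exists a
trajectory starting from `q₀`, and any two such trajectories coincide on `[0,∞)`. -/

theorem linear_swimmer_existence_uniqueness
    {S Q : Type*} [NormedAddCommGroup S] [NormedSpace ℝ S] [CompleteSpace S]
    [NormedAddCommGroup Q] [NormedSpace ℝ Q] [FiniteDimensional ℝ Q]
    (F : Q → S → (S →L[ℝ] Q))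
    (hFcont : Continuous fun p : Q × S => F p.1 p.2)
    (K L : ℝ) (hK : 0 < K) (hL : 0 < L)
    (hFbound : ∀ (q : Q) (s v : S), ‖F q s v‖ ≤ K * ‖s‖ * ‖v‖)
    (hFlip : ∀ (q₁ q₂ : Q) (s v : S),
      ‖F q₁ s v - F q₂ s v‖ ≤ L * ‖q₁ - q₂‖ * ‖s‖ * ‖v‖)
    (s : ℝ → S) (hs : ContDiffOn ℝ 1 s (Ici 0)) (q₀ : Q) :
    (∃ q : ℝ → Q, ContDiffOn ℝ 1 q (Ici 0) ∧ q 0 = q₀ ∧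
      ∀ t ∈ Ici (0:ℝ),
        derivWithin q (Ici 0) t = F (q t) (s t) (derivWithin s (Ici 0) t)) ∧
    (∀ q₁ q₂ : ℝ → Q,
      (ContDiffOn ℝ 1 q₁ (Ici 0) ∧ q₁ 0 = q₀ ∧
        ∀ t ∈ Ici (0:ℝ),
          derivWithin q₁ (Ici 0) t = F (q₁ t) (s t) (derivWithin s (Ici 0) t)) →
      (ContDiffOn ℝ 1 q₂ (Ici 0) ∧ q₂ 0 = q₀ ∧
        ∀ t ∈ Ici (0:ℝ),
          derivWithin q₂ (Ici 0) t = F (q₂ t) (s t) (derivWithin s (Ici 0) t)) →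
      ∀ t ∈ Ici (0:ℝ), q₁ t = q₂ t) := by
  have hUD : UniqueDiffOn ℝ (Ici (0:ℝ)) := uniqueDiffOn_Ici 0
  set v₀ : ℝ → S := fun t => derivWithin s (Ici 0) t with hv₀def
  have hs' := (contDiffOn_succ_iff_derivWithin (n := 0) hUD).1 (by exact_mod_cast hs)
  have hscont : ContinuousOn s (Ici 0) := hs.continuousOn
  have hvcont : ContinuousOn v₀ (Ici 0) := contDiffOn_zero.1 hs'.2.2
  -- clamped shape and shape-velocity
  set st : ℝ → S := fun t => s (max t 0) with hstdef
  set vt : ℝ → S := fun t => v₀ (max t 0) with hvtdef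
  have hmax : Continuous fun t : ℝ => max t 0 := continuous_id.max continuous_const
  have hstc : Continuous st := hscont.comp_continuous hmax fun t => le_max_right t 0
  have hvtc : Continuous vt := hvcont.comp_continuous hmax fun t => le_max_right t 0
  -- the vector field
  set f : ℝ → Q → Q := fun t x => F x (st t) (vt t) with hfdef
  have hfj : Continuous fun p : ℝ × Q => f p.1 p.2 := by
    have h1 : Continuous fun p : ℝ × Q => ((F p.2 (st p.1) : S →L[ℝ] Q), vt p.1) :=
      (hFcont.comp ((continuous_snd).prodMk (hstc.comp continuous_fst))).prodMk
        (hvtc.comp continuous_fst)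
    exact isBoundedBilinearMap_apply.continuous.comp h1
  -- bound on compacts
  have hb : ∀ b : ℝ, 0 ≤ b → ∃ B : ℝ, 0 ≤ B ∧ ∀ t ∈ Icc (0:ℝ) b, ‖st t‖ * ‖vt t‖ ≤ B := by
    intro b hb0
    obtain ⟨C, hC⟩ := (isCompact_Icc (a := (0:ℝ)) (b := b)).exists_bound_of_continuousOn
      (f := fun t => ‖st t‖ * ‖vt t‖) ((hstc.norm.mul hvtc.norm).continuousOn)
    refine ⟨max C 0, le_max_right _ _, fun t ht => ?_⟩
    calc ‖st t‖ * ‖vt t‖ ≤ ‖‖st t‖ * ‖vt t‖‖ := le_abs_self _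
    _ ≤ C := hC t ht
    _ ≤ max C 0 := le_max_left _ _
  -- core uniqueness lemma
  have huniq_core : ∀ b : ℝ, 0 ≤ b → ∀ g h : ℝ → Q, ContinuousOn g (Icc 0 b) →
      (∀ t ∈ Ico (0:ℝ) b, HasDerivWithinAt g (f t (g t)) (Ici t) t) →
      ContinuousOn h (Icc 0 b) →
      (∀ t ∈ Ico (0:ℝ) b, HasDerivWithinAt h (f t (h t)) (Ici t) t) →
      g 0 = h 0 → EqOn g h (Icc 0 b) := by
    intro b hb0 g h hgc hg' hhc hh' h0
    obtain ⟨B, hB0, hB⟩ := hb b hb0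
    set w : ℝ → Q → Q := fun t x => f (max (min t b) 0) x with hwdef
    have hw : ∀ t : ℝ, LipschitzOnWith (L * B).toNNReal (w t) univ := by
      intro t
      rw [lipschitzOnWith_iff_dist_le_mul]
      intro x _ y _
      have hm : max (min t b) 0 ∈ Icc (0:ℝ) b :=
        ⟨le_max_right _ _, max_le (min_le_right t b) hb0⟩
      rw [dist_eq_norm, dist_eq_norm]
      calc ‖w t x - w t y‖
          ≤ L * ‖x - y‖ * ‖st (max (min t b) 0)‖ * ‖vt (max (min t b) 0)‖ := hFlip _ _ _ _
        _ = L * (‖st (max (min t b) 0)‖ * ‖vt (max (min t b) 0)‖) * ‖x - y‖ := by ring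
        _ ≤ L * B * ‖x - y‖ := by
            apply mul_le_mul_of_nonneg_right _ (norm_nonneg _)
            exact mul_le_mul_of_nonneg_left (hB _ hm) hL.le
        _ ≤ (L * B).toNNReal * ‖x - y‖ := by
            apply mul_le_mul_of_nonneg_right _ (norm_nonneg _)
            rw [Real.coe_toNNReal']
            exact le_max_left _ _
    have key : ∀ (r : ℝ → Q), (∀ t ∈ Ico (0:ℝ) b, HasDerivWithinAt r (f t (r t)) (Ici t) t) →
        ∀ t ∈ Ico (0:ℝ) b, HasDerivWithinAt r (w t (r t)) (Ici t) t := by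
      intro r hr t ht
      have : max (min t b) 0 = t := by rw [min_eq_left ht.2.le, max_eq_left ht.1]
      simpa only [hwdef, this] using hr t ht
    exact ODE_solution_unique_of_mem_Icc_right (s := fun _ => (univ : Set Q)) (fun t _ => hw t) hgc
      (key g hg') (fun _ _ => trivial) hhc (key h hh') (fun _ _ => trivial) h0
  -- existence on [0, n]
  have hexist : ∀ n : ℕ, ∃ α : ℝ → Q, α 0 = q₀ ∧
      ∀ t ∈ Icc (0:ℝ) n, HasDerivWithinAt α (f t (α t)) (Icc 0 (n:ℝ)) t := by
    intro n
    obtain ⟨B, hB0, hB⟩ := hb n (Nat.cast_nonneg n)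
    have hpl : IsPicardLindelof f (tmin := 0) (tmax := (n:ℝ)) ⟨0, le_rfl, Nat.cast_nonneg n⟩ q₀
        (K * B * n).toNNReal 0 (K * B).toNNReal (L * B).toNNReal := by
      refine ⟨?_, ?_, ?_, ?_⟩
      · intro t ht
        rw [lipschitzOnWith_iff_dist_le_mul]
        intro x _ y _
        rw [dist_eq_norm, dist_eq_norm]
        calc ‖f t x - f t y‖ ≤ L * ‖x - y‖ * ‖st t‖ * ‖vt t‖ := hFlip _ _ _ _
          _ = L * (‖st t‖ * ‖vt t‖) * ‖x - y‖ := by ring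
          _ ≤ L * B * ‖x - y‖ := by
              apply mul_le_mul_of_nonneg_right _ (norm_nonneg _)
              exact mul_le_mul_of_nonneg_left (hB t ht) hL.le
          _ ≤ (L * B).toNNReal * ‖x - y‖ := by
              apply mul_le_mul_of_nonneg_right _ (norm_nonneg _)
              rw [Real.coe_toNNReal']
              exact le_max_left _ _
      · intro x _
        exact (hfj.comp (continuous_id.prodMk continuous_const)).continuousOn
      · intro t ht x _
        calc ‖f t x‖ ≤ K * ‖st t‖ * ‖vt t‖ := hFbound _ _ _
          _ = K * (‖st t‖ * ‖vt t‖) := by ring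
          _ ≤ K * B := mul_le_mul_of_nonneg_left (hB t ht) hK.le
          _ ≤ (K * B).toNNReal := Real.le_coe_toNNReal _
      · have : max ((n:ℝ) - 0) (0 - 0) = (n:ℝ) := by
          rw [sub_zero, sub_zero, max_eq_left (Nat.cast_nonneg n)]
        simp only [this, NNReal.coe_zero, sub_zero, Real.coe_toNNReal _ (by positivity : (0:ℝ) ≤ K * B),
          Real.coe_toNNReal _ (by positivity : (0:ℝ) ≤ K * B * n), le_refl,
          max_eq_left (Nat.cast_nonneg (α := ℝ) n)]
    exact hpl.exists_eq_forall_mem_Icc_hasDerivWithinAt₀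
  choose α hα0 hα using hexist
  -- continuity of α n on Icc 0 n
  have hαc : ∀ n : ℕ, ContinuousOn (α n) (Icc 0 (n:ℝ)) :=
    fun n t ht => (hα n t ht).continuousWithinAt
  -- derivative within Ici t
  have hαd : ∀ (n : ℕ), ∀ t ∈ Ico (0:ℝ) n, HasDerivWithinAt (α n) (f t (α n t)) (Ici t) t := by
    intro n t ht
    refine (hα n t ⟨ht.1, ht.2.le⟩).mono_of_mem_nhdsWithin ?_
    exact Filter.mem_of_superset (Icc_mem_nhdsGE ht.2) (Icc_subset_Icc_left ht.1)
  -- compatibility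
  have compat : ∀ m n : ℕ, (m:ℝ) ≤ (n:ℝ) → EqOn (α m) (α n) (Icc 0 (m:ℝ)) := by
    intro m n hmn
    refine huniq_core m (Nat.cast_nonneg m) _ _ (hαc m) (hαd m)
      ((hαc n).mono (Icc_subset_Icc_right hmn))
      (fun t ht => hαd n t ⟨ht.1, lt_of_lt_of_le ht.2 hmn⟩) ?_
    rw [hα0 m, hα0 n]
  -- the global solution
  set q : ℝ → Q := fun t => α (⌊max t 0⌋₊ + 1) (max t 0) with hqdef
  have hqeq : ∀ (n : ℕ) (t : ℝ), 0 ≤ t → t ≤ (n:ℝ) → q t = α n t := by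
    intro n t ht0 htn
    have hmx : max t 0 = t := max_eq_left ht0
    have hlt : t < ((⌊t⌋₊ + 1 : ℕ) : ℝ) := by push_cast; exact Nat.lt_floor_add_one t
    rcases le_total (((⌊t⌋₊ + 1 : ℕ):ℝ)) ((n:ℝ)) with h | h
    · have := compat (⌊t⌋₊ + 1) n h ⟨ht0, hlt.le⟩
      simpa [hqdef, hmx] using this
    · have := compat n (⌊t⌋₊ + 1) h ⟨ht0, htn⟩
      simp only [hqdef, hmx]
      exact this.symm
  have hq0 : q 0 = q₀ := by
    have := hqeq 1 0 le_rfl (by norm_num)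
    rw [this, hα0]
  -- derivative of q
  have hqderiv : ∀ t ∈ Ici (0:ℝ), HasDerivWithinAt q (f t (q t)) (Ici 0) t := by
    intro t ht
    set n : ℕ := ⌊t⌋₊ + 1 with hndef
    have htn : t < (n:ℝ) := by rw [hndef]; push_cast; exact Nat.lt_floor_add_one t
    have h1 : HasDerivWithinAt (α n) (f t (α n t)) (Icc 0 (n:ℝ)) t := hα n t ⟨ht, htn.le⟩
    have h2 : Icc (0:ℝ) (n:ℝ) ∈ nhdsWithin t (Ici 0) := by
      refine mem_nhdsWithin.2 ⟨Iio (n:ℝ), isOpen_Iio, htn, ?_⟩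
      rintro x ⟨hx1, hx2⟩; exact ⟨hx2, hx1.le⟩
    have h3 : HasDerivWithinAt (α n) (f t (α n t)) (Ici 0) t := h1.mono_of_mem_nhdsWithin h2
    have heq : q =ᶠ[nhdsWithin t (Ici 0)] α n := by
      have hmem : Ici (0:ℝ) ∩ Iio (n:ℝ) ∈ nhdsWithin t (Ici 0) :=
        Filter.inter_mem self_mem_nhdsWithin
          (mem_nhdsWithin_of_mem_nhds (Iio_mem_nhds htn))
      filter_upwards [hmem] with x hx
      exact hqeq n x hx.1 hx.2.le
    have hqt : q t = α n t := hqeq n t ht htn.le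
    have := h3.congr_of_eventuallyEq heq hqt
    rwa [← hqt] at this
  have hqdiff : DifferentiableOn ℝ q (Ici 0) :=
    fun t ht => (hqderiv t ht).differentiableWithinAt
  have hqc : ContinuousOn q (Ici 0) := hqdiff.continuousOn
  have hqdW : ∀ t ∈ Ici (0:ℝ), derivWithin q (Ici 0) t = f t (q t) :=
    fun t ht => (hqderiv t ht).derivWithin (hUD t ht)
  have hfq : ∀ t ∈ Ici (0:ℝ), f t (q t) = F (q t) (s t) (v₀ t) := by
    intro t ht
    simp only [hfdef, hstdef, hvtdef, max_eq_left (mem_Ici.1 ht)]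
  constructor
  · refine ⟨q, ?_, hq0, fun t ht => by rw [hqdW t ht, hfq t ht]⟩
    rw [show (1 : WithTop ℕ∞) = 0 + 1 by norm_num, contDiffOn_succ_iff_derivWithin hUD]
    refine ⟨hqdiff, by simp, ?_⟩
    rw [contDiffOn_zero]
    have hcc : ContinuousOn (fun t => f t (q t)) (Ici 0) :=
      hfj.comp_continuousOn (continuousOn_id.prodMk hqc)
    exact hcc.congr hqdW
  · rintro q₁ q₂ ⟨h₁s, h₁0, h₁d⟩ ⟨h₂s, h₂0, h₂d⟩ t ht
    have hconv : ∀ r : ℝ → Q, ContDiffOn ℝ 1 r (Ici 0) →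
        (∀ u ∈ Ici (0:ℝ), derivWithin r (Ici 0) u = F (r u) (s u) (v₀ u)) →
        ∀ u ∈ Ico (0:ℝ) t, HasDerivWithinAt r (f u (r u)) (Ici u) u := by
      intro r hr hrd u hu
      have h1 : HasDerivWithinAt r (derivWithin r (Ici 0) u) (Ici 0) u :=
        ((hr.differentiableOn one_ne_zero) u hu.1).hasDerivWithinAt
      rw [hrd u hu.1] at h1
      have h2 : f u (r u) = F (r u) (s u) (v₀ u) := by
        simp only [hfdef, hstdef, hvtdef, max_eq_left hu.1]
      rw [h2]
      exact h1.mono (Ici_subset_Ici.2 hu.1)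
    exact huniq_core t ht q₁ q₂ (h₁s.continuousOn.mono Icc_subset_Ici_self)
      (hconv q₁ h₁s h₁d) (h₂s.continuousOn.mono Icc_subset_Ici_self)
      (hconv q₂ h₂s h₂d) (h₁0.trans h₂0.symm) ⟨ht, le_rfl⟩
end

section
/- (Reparameterization property of linear swimmers.) In the linear swimmer model with F additionally Lipschitz in its first argument (‖(F(q₁,s) − F(q₂,s))(v)‖ ≤ L‖q₁ − q₂‖‖s‖‖v‖ for some L > 0), let s : [0,∞) → S be C¹ and let q : [0,∞) → Q be a trajectory for s. Let β : [0,∞) → [0,∞) be C¹, and let q_β : [0,∞) → Q be a trajectory for the shape function s ∘ β satisfying q_β(0) = q(β(0)). Then q_β(t) = q(β(t)) for all t ≥ 0. -/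
open Set

/-- **Reparameterization property of linear swimmers** (Proposition 1 of the paper).
In the linear swimmer model, with `F` Lipschitz in its first argument, if `q` is a
trajectory for the shape function `s`, `β : [0,∞) → [0,∞)` is `C¹`, and `q_β` is a
trajectory for the shape function `s ∘ β` with `q_β(0) = q(β(0))`, then
`q_β(t) = q(β(t))` for all `t ≥ 0`. -/
theorem linear_swimmer_reparameterization
    {S Q : Type*} [NormedAddCommGroup S] [NormedSpace ℝ S] [CompleteSpace S]
    [NormedAddCommGroup Q] [NormedSpace ℝ Q] [FiniteDimensional ℝ Q]
    (F : Q → S → (S →L[ℝ] Q))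
    (hFcont : Continuous fun p : Q × S => F p.1 p.2)
    (K L : ℝ) (hK : 0 < K) (hL : 0 < L)
    (hFbound : ∀ (q : Q) (s v : S), ‖F q s v‖ ≤ K * ‖s‖ * ‖v‖)
    (hFlip : ∀ (q₁ q₂ : Q) (s v : S),
      ‖F q₁ s v - F q₂ s v‖ ≤ L * ‖q₁ - q₂‖ * ‖s‖ * ‖v‖)
    (s : ℝ → S) (hs : ContDiffOn ℝ 1 s (Ici 0))
    (q : ℝ → Q) (hq : ContDiffOn ℝ 1 q (Ici 0))
    (hode : ∀ t ∈ Ici (0:ℝ),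
      derivWithin q (Ici 0) t = F (q t) (s t) (derivWithin s (Ici 0) t))
    (β : ℝ → ℝ) (hβ : ContDiffOn ℝ 1 β (Ici 0))
    (hβpos : ∀ t ∈ Ici (0:ℝ), β t ∈ Ici (0:ℝ))
    (qβ : ℝ → Q) (hqβ : ContDiffOn ℝ 1 qβ (Ici 0))
    (hodeβ : ∀ t ∈ Ici (0:ℝ),
      derivWithin qβ (Ici 0) t = F (qβ t) ((s ∘ β) t) (derivWithin (s ∘ β) (Ici 0) t))
    (hinit : qβ 0 = q (β 0)) :
    ∀ t ∈ Ici (0:ℝ), qβ t = q (β t) := by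
  have hUD : UniqueDiffOn ℝ (Ici (0:ℝ)) := uniqueDiffOn_Ici 0
  set w := derivWithin (s ∘ β) (Ici 0) with hw_def
  have hβmaps : MapsTo β (Ici 0) (Ici (0:ℝ)) := hβpos
  have hsβ : ContDiffOn ℝ 1 (s ∘ β) (Ici 0) := hs.comp hβ hβmaps
  have hwcont : ContinuousOn w (Ici 0) := hsβ.continuousOn_derivWithin hUD le_rfl
  have hβ' : ∀ t ∈ Ici (0:ℝ), HasDerivWithinAt β (derivWithin β (Ici 0) t) (Ici 0) t :=
    fun t ht => (hβ.differentiableOn one_ne_zero t ht).hasDerivWithinAt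
  have hs' : ∀ t ∈ Ici (0:ℝ), HasDerivWithinAt s (derivWithin s (Ici 0) t) (Ici 0) t :=
    fun t ht => (hs.differentiableOn one_ne_zero t ht).hasDerivWithinAt
  have hq' : ∀ t ∈ Ici (0:ℝ), HasDerivWithinAt q (derivWithin q (Ici 0) t) (Ici 0) t :=
    fun t ht => (hq.differentiableOn one_ne_zero t ht).hasDerivWithinAt
  have hqβ' : ∀ t ∈ Ici (0:ℝ), HasDerivWithinAt qβ (derivWithin qβ (Ici 0) t) (Ici 0) t :=
    fun t ht => (hqβ.differentiableOn one_ne_zero t ht).hasDerivWithinAt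
  have hw : ∀ t ∈ Ici (0:ℝ),
      w t = derivWithin β (Ici 0) t • derivWithin s (Ici 0) (β t) := by
    intro t ht
    exact ((hs' (β t) (hβpos t ht)).scomp t (hβ' t ht) hβmaps).derivWithin (hUD t ht)
  have hqcomp : ∀ t ∈ Ici (0:ℝ),
      HasDerivWithinAt (q ∘ β) (F (q (β t)) (s (β t)) (w t)) (Ici 0) t := by
    intro t ht
    have h1 := (hq' (β t) (hβpos t ht)).scomp t (hβ' t ht) hβmaps
    rw [hode (β t) (hβpos t ht)] at h1
    rw [hw t ht]
    simpa [ContinuousLinearMap.map_smul] using h1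
  intro T hT
  have hT0 : (0:ℝ) ≤ T := hT
  -- clamp to [0, T]
  set c : ℝ → ℝ := fun t => max 0 (min t T) with hc_def
  have hcmem : ∀ t, c t ∈ Icc (0:ℝ) T :=
    fun t => ⟨le_max_left _ _, max_le hT0 (min_le_right _ _)⟩
  have hceq : ∀ t ∈ Icc (0:ℝ) T, c t = t := by
    intro t ht
    simp [hc_def, min_eq_left ht.2, max_eq_right ht.1]
  -- bound the Lipschitz coefficient on [0, T]
  have hIcc : Icc (0:ℝ) T ⊆ Ici 0 := Icc_subset_Ici_self
  have hcontcoef : ContinuousOn (fun t => L * ‖s (β t)‖ * ‖w t‖) (Icc (0:ℝ) T) := by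
    have h1 : ContinuousOn (fun t => ‖s (β t)‖) (Icc (0:ℝ) T) :=
      ((hsβ.continuousOn).mono hIcc).norm
    have h2 : ContinuousOn (fun t => ‖w t‖) (Icc (0:ℝ) T) := (hwcont.mono hIcc).norm
    exact (continuousOn_const.mul h1).mul h2
  obtain ⟨C, hC⟩ := isCompact_Icc.exists_bound_of_continuousOn hcontcoef
  have hCcoef : ∀ t ∈ Icc (0:ℝ) T, L * ‖s (β t)‖ * ‖w t‖ ≤ C := by
    intro t ht
    exact le_trans (le_abs_self _) (hC t ht)
  -- the common ODE vector field
  set v : ℝ → Q → Q := fun t x => F x (s (β (c t))) (w (c t)) with hv_def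
  have hlip : ∀ t, LipschitzOnWith C.toNNReal (v t) univ := by
    intro t
    rw [lipschitzOnWith_univ]
    apply LipschitzWith.of_dist_le_mul
    intro x y
    rw [dist_eq_norm, dist_eq_norm]
    calc ‖v t x - v t y‖ ≤ L * ‖x - y‖ * ‖s (β (c t))‖ * ‖w (c t)‖ := hFlip _ _ _ _
      _ = (L * ‖s (β (c t))‖ * ‖w (c t)‖) * ‖x - y‖ := by ring
      _ ≤ C * ‖x - y‖ := by
          apply mul_le_mul_of_nonneg_right (hCcoef _ (hcmem t)) (norm_nonneg _)
      _ ≤ (C.toNNReal : ℝ) * ‖x - y‖ := by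
          apply mul_le_mul_of_nonneg_right (Real.le_coe_toNNReal C) (norm_nonneg _)
  have key : EqOn qβ (q ∘ β) (Icc (0:ℝ) T) := by
    apply ODE_solution_unique_of_mem_Icc_right (fun t _ => hlip t)
      ((hqβ.continuousOn).mono hIcc) ?_ (fun t _ => mem_univ _)
      (((hq.continuousOn.comp hβ.continuousOn hβmaps)).mono hIcc) ?_ (fun t _ => mem_univ _)
      (by simpa using hinit)
    · intro t ht
      have ht' : t ∈ Ici (0:ℝ) := ht.1
      have h1 := hqβ' t ht'
      rw [hodeβ t ht'] at h1
      have h2 : v t (qβ t) = F (qβ t) ((s ∘ β) t) (w t) := by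
        rw [hv_def]
        simp only [hceq t ⟨ht.1, le_of_lt ht.2⟩, Function.comp]
      rw [h2]
      exact h1.mono (Ici_subset_Ici.mpr ht.1)
    · intro t ht
      have ht' : t ∈ Ici (0:ℝ) := ht.1
      have h1 := hqcomp t ht'
      have h2 : v t ((q ∘ β) t) = F (q (β t)) (s (β t)) (w t) := by
        rw [hv_def]
        simp only [hceq t ⟨ht.1, le_of_lt ht.2⟩, Function.comp]
      rw [h2]
      exact h1.mono (Ici_subset_Ici.mpr ht.1)
  exact key ⟨hT0, le_refl T⟩
end

section
/- (Scallop theorem for reciprocal strokes.) In the linear swimmer model with F additionally Lipschitz in its first argument (‖(F(q₁,s) − F(q₂,s))(v)‖ ≤ L‖q₁ − q₂‖‖s‖‖v‖ for some L > 0), let s : [0,∞) → S be C¹, let β : [0,∞) → [0,∞) be C¹, and let q_β : [0,∞) → Q be a trajectory for the shape function s ∘ β. If T > 0 satisfies β(T) = β(0), then q_β(T) = q_β(0); that is, whenever the reparameterization returns to its initial value, the swimmer returns to its initial position. -/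
open Set

/-- **Scallop theorem for reciprocal strokes.**
In the linear swimmer model, with `F` Lipschitz in its first argument, if the shape
function has the reciprocal form `s ∘ β` for a scalar `C¹` reparameterization
`β : [0,∞) → [0,∞)`, then whenever `β` returns to its initial value, so does any
trajectory: `β(T) = β(0)` implies `q_β(T) = q_β(0)`. -/
theorem scallop_theorem_reciprocal
    {S Q : Type*} [NormedAddCommGroup S] [NormedSpace ℝ S] [CompleteSpace S]
    [NormedAddCommGroup Q] [NormedSpace ℝ Q] [FiniteDimensional ℝ Q]
    (F : Q → S → (S →L[ℝ] Q))
    (hFcont : Continuous fun p : Q × S => F p.1 p.2)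
    (K L : ℝ) (hK : 0 < K) (hL : 0 < L)
    (hFbound : ∀ (q : Q) (s v : S), ‖F q s v‖ ≤ K * ‖s‖ * ‖v‖)
    (hFlip : ∀ (q₁ q₂ : Q) (s v : S),
      ‖F q₁ s v - F q₂ s v‖ ≤ L * ‖q₁ - q₂‖ * ‖s‖ * ‖v‖)
    (s : ℝ → S) (hs : ContDiffOn ℝ 1 s (Ici 0))
    (β : ℝ → ℝ) (hβ : ContDiffOn ℝ 1 β (Ici 0))
    (hβpos : ∀ t ∈ Ici (0:ℝ), β t ∈ Ici (0:ℝ))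
    (qβ : ℝ → Q) (hqβ : ContDiffOn ℝ 1 qβ (Ici 0))
    (hodeβ : ∀ t ∈ Ici (0:ℝ),
      derivWithin qβ (Ici 0) t = F (qβ t) ((s ∘ β) t) (derivWithin (s ∘ β) (Ici 0) t))
    (T : ℝ) (hT : 0 < T) (hret : β T = β 0) :
    qβ T = qβ 0 := by
  have UD : UniqueDiffOn ℝ (Ici (0:ℝ)) := uniqueDiffOn_Ici 0
  set ds : ℝ → S := derivWithin s (Ici 0) with hds_def
  set db : ℝ → ℝ := derivWithin β (Ici 0) with hdb_def
  set w : ℝ → S := derivWithin (s ∘ β) (Ici 0) with hw_def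
  have hβmaps : MapsTo β (Ici (0:ℝ)) (Ici (0:ℝ)) := fun t ht => hβpos t ht
  -- derivative facts
  have hsd : ∀ u ∈ Ici (0:ℝ), HasDerivWithinAt s (ds u) (Ici 0) u :=
    fun u hu => (hs.differentiableOn one_ne_zero u hu).hasDerivWithinAt
  have hbd : ∀ t ∈ Ici (0:ℝ), HasDerivWithinAt β (db t) (Ici 0) t :=
    fun t ht => (hβ.differentiableOn one_ne_zero t ht).hasDerivWithinAt
  have hwchain : ∀ t ∈ Ici (0:ℝ),
      HasDerivWithinAt (s ∘ β) (db t • ds (β t)) (Ici 0) t :=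
    fun t ht => (hsd (β t) (hβpos t ht)).scomp t (hbd t ht) hβmaps
  have hweq : ∀ t ∈ Ici (0:ℝ), w t = db t • ds (β t) :=
    fun t ht => (hwchain t ht).derivWithin (UD t ht)
  -- range of β on [0,T]
  have hIccsub : Icc (0:ℝ) T ⊆ Ici 0 := Icc_subset_Ici_self
  have hβcont : ContinuousOn β (Icc 0 T) := (hβ.continuousOn).mono hIccsub
  have hne : (Icc (0:ℝ) T).Nonempty := ⟨0, le_rfl, hT.le⟩
  obtain ⟨tm, htm, hmin⟩ := isCompact_Icc.exists_isMinOn hne hβcont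
  obtain ⟨tM, htM, hmax⟩ := isCompact_Icc.exists_isMaxOn hne hβcont
  set a : ℝ := β tm with ha_def
  set b : ℝ := β tM with hb_def
  have ha0 : (0:ℝ) ≤ a := hβpos tm (hIccsub htm)
  have hab : ∀ t ∈ Icc (0:ℝ) T, β t ∈ Icc a b := fun t ht => ⟨hmin ht, hmax ht⟩
  have habsub : Icc a b ⊆ Ici (0:ℝ) := fun u hu => le_trans ha0 hu.1
  have h0T : (0:ℝ) ∈ Icc (0:ℝ) T := ⟨le_rfl, hT.le⟩
  have hTT : T ∈ Icc (0:ℝ) T := ⟨hT.le, le_rfl⟩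
  have ht₀ : β 0 ∈ Icc a b := hab 0 h0T
  -- bounds
  have hscont : ContinuousOn s (Icc a b) := hs.continuousOn.mono habsub
  have hdscont : ContinuousOn ds (Icc a b) :=
    (hs.continuousOn_derivWithin UD le_rfl).mono habsub
  obtain ⟨Ms₀, hMs₀⟩ := isCompact_Icc.exists_bound_of_continuousOn hscont
  obtain ⟨Md₀, hMd₀⟩ := isCompact_Icc.exists_bound_of_continuousOn hdscont
  set Ms : ℝ := max Ms₀ 0 with hMs_def
  set Md : ℝ := max Md₀ 0 with hMd_def
  have hMs : ∀ u ∈ Icc a b, ‖s u‖ ≤ Ms := fun u hu => (hMs₀ u hu).trans (le_max_left _ _)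
  have hMd : ∀ u ∈ Icc a b, ‖ds u‖ ≤ Md := fun u hu => (hMd₀ u hu).trans (le_max_left _ _)
  have hMs0 : 0 ≤ Ms := le_max_right _ _
  have hMd0 : 0 ≤ Md := le_max_right _ _
  -- w is continuous on [0, T]
  have hsβ : ContDiffOn ℝ 1 (s ∘ β) (Ici 0) := hs.comp hβ hβmaps
  have hwcont : ContinuousOn w (Icc 0 T) :=
    (hsβ.continuousOn_derivWithin UD le_rfl).mono hIccsub
  obtain ⟨Mw₀, hMw₀⟩ := isCompact_Icc.exists_bound_of_continuousOn hwcont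
  set Mw : ℝ := max Mw₀ 0 with hMw_def
  have hMw : ∀ t ∈ Icc (0:ℝ) T, ‖w t‖ ≤ Mw := fun t ht => (hMw₀ t ht).trans (le_max_left _ _)
  have hMw0 : 0 ≤ Mw := le_max_right _ _
  -- Picard–Lindelöf data
  set G : ℝ → Q → Q := fun u x => F x (s u) (ds u) with hG_def
  set C : ℝ := K * Ms * Md with hC_def
  have hC0 : 0 ≤ C := mul_nonneg (mul_nonneg hK.le hMs0) hMd0
  set Λ : NNReal := (L * Ms * Md).toNNReal with hΛ_def
  have hΛcoe : (Λ : ℝ) = max (L * Ms * Md) 0 := by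
    simp [hΛ_def, Real.coe_toNNReal']
  set R : ℝ := C * max (b - β 0) (β 0 - a) with hR_def
  have hR0 : 0 ≤ R := by
    apply mul_nonneg hC0
    exact le_trans (by linarith [ht₀.2] : (0:ℝ) ≤ b - β 0) (le_max_left _ _)
  have hpl : IsPicardLindelof G (tmin := a) (tmax := b) ⟨β 0, ht₀⟩ (qβ 0) R.toNNReal 0
      C.toNNReal Λ := by
    refine ⟨?_, ?_, ?_, ?_⟩
    · intro u hu
      rw [lipschitzOnWith_iff_dist_le_mul]
      intro x hx y hy
      rw [dist_eq_norm, dist_eq_norm]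
      have h1 : ‖F x (s u) (ds u) - F y (s u) (ds u)‖ ≤ L * ‖x - y‖ * ‖s u‖ * ‖ds u‖ :=
        hFlip x y (s u) (ds u)
      have h2 : L * ‖x - y‖ * ‖s u‖ * ‖ds u‖ ≤ L * ‖x - y‖ * Ms * Md :=
        mul_le_mul (mul_le_mul_of_nonneg_left (hMs u hu)
            (mul_nonneg hL.le (norm_nonneg _))) (hMd u hu) (norm_nonneg _)
          (mul_nonneg (mul_nonneg hL.le (norm_nonneg _)) hMs0)
      refine h1.trans (h2.trans ?_)
      rw [hΛcoe]
      have : L * ‖x - y‖ * Ms * Md = (L * Ms * Md) * ‖x - y‖ := by ring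
      rw [this]
      exact mul_le_mul_of_nonneg_right (le_max_left _ _) (norm_nonneg _)
    · intro x _
      have h1 : ContinuousOn (fun u => F x (s u)) (Icc a b) :=
        hFcont.comp_continuousOn (f := fun u => (x, s u)) (continuousOn_const.prodMk hscont)
      exact isBoundedBilinearMap_apply.continuous.comp_continuousOn (h1.prodMk hdscont)
    · intro u hu x _
      have h1 : ‖F x (s u) (ds u)‖ ≤ K * ‖s u‖ * ‖ds u‖ := hFbound x (s u) (ds u)
      refine h1.trans (le_trans ?_ (Real.le_coe_toNNReal C))
      rw [hC_def]
      exact mul_le_mul (mul_le_mul_of_nonneg_left (hMs u hu) hK.le) (hMd u hu)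
        (norm_nonneg _) (mul_nonneg hK.le hMs0)
    · rw [Real.coe_toNNReal _ hC0]
      simp [Real.coe_toNNReal _ hR0, hR_def]
  obtain ⟨φ, hφ0, hφd⟩ := hpl.exists_eq_forall_mem_Icc_hasDerivWithinAt₀
  replace hφ0 : φ (β 0) = qβ 0 := hφ0
  have hφcont : ContinuousOn φ (Icc a b) := fun u hu => (hφd u hu).continuousWithinAt
  -- the clamping map and the comparison vector field
  set c : ℝ → ℝ := fun t => max 0 (min t T) with hc_def
  have hcmem : ∀ t, c t ∈ Icc (0:ℝ) T := fun t =>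
    ⟨le_max_left _ _, max_le hT.le (min_le_right _ _)⟩
  have hceq : ∀ t ∈ Icc (0:ℝ) T, c t = t := fun t ht => by
    simp [hc_def, min_eq_left ht.2, max_eq_right ht.1]
  set v : ℝ → Q → Q := fun t x => F x (s (β (c t))) (w (c t)) with hv_def
  set Λ₂ : NNReal := (L * Ms * Mw).toNNReal with hΛ₂_def
  have hΛ₂coe : (Λ₂ : ℝ) = max (L * Ms * Mw) 0 := by
    simp [hΛ₂_def, Real.coe_toNNReal']
  have hv : ∀ t, LipschitzOnWith Λ₂ (v t) (univ : Set Q) := by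
    intro t
    rw [lipschitzOnWith_iff_dist_le_mul]
    intro x _ y _
    rw [dist_eq_norm, dist_eq_norm]
    have h1 := hFlip x y (s (β (c t))) (w (c t))
    have h2 : L * ‖x - y‖ * ‖s (β (c t))‖ * ‖w (c t)‖ ≤ L * ‖x - y‖ * Ms * Mw :=
      mul_le_mul (mul_le_mul_of_nonneg_left (hMs _ (hab _ (hcmem t)))
          (mul_nonneg hL.le (norm_nonneg _))) (hMw _ (hcmem t)) (norm_nonneg _)
        (mul_nonneg (mul_nonneg hL.le (norm_nonneg _)) hMs0)
    refine h1.trans (h2.trans ?_)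
    rw [hΛ₂coe]
    have : L * ‖x - y‖ * Ms * Mw = (L * Ms * Mw) * ‖x - y‖ := by ring
    rw [this]
    exact mul_le_mul_of_nonneg_right (le_max_left _ _) (norm_nonneg _)
  -- qβ solves the ODE for v
  have hf' : ∀ t ∈ Ico (0:ℝ) T, HasDerivWithinAt qβ (v t (qβ t)) (Ici t) t := by
    intro t ht
    have ht0 : t ∈ Ici (0:ℝ) := ht.1
    have h1 : HasDerivWithinAt qβ (derivWithin qβ (Ici 0) t) (Ici 0) t :=
      (hqβ.differentiableOn one_ne_zero t ht0).hasDerivWithinAt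
    rw [hodeβ t ht0] at h1
    have hvt : v t (qβ t) = F (qβ t) ((s ∘ β) t) (w t) := by
      simp [hv_def, hceq t ⟨ht.1, ht.2.le⟩, Function.comp]
    rw [hvt]
    exact h1.mono (Ici_subset_Ici.2 ht.1)
  -- φ ∘ β solves the same ODE
  have hg' : ∀ t ∈ Ico (0:ℝ) T, HasDerivWithinAt (φ ∘ β) (v t ((φ ∘ β) t)) (Ici t) t := by
    intro t ht
    have htI : t ∈ Icc (0:ℝ) T := ⟨ht.1, ht.2.le⟩
    have hβt : β t ∈ Icc a b := hab t htI
    have hβmaps' : MapsTo β (Icc (0:ℝ) T) (Icc a b) := fun u hu => hab u hu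
    have hb1 : HasDerivWithinAt β (db t) (Icc 0 T) t := (hbd t ht.1).mono hIccsub
    have hcomp : HasDerivWithinAt (φ ∘ β) (db t • G (β t) (φ (β t))) (Icc 0 T) t :=
      (hφd (β t) hβt).scomp t hb1 hβmaps'
    have hval : db t • G (β t) (φ (β t)) = v t ((φ ∘ β) t) := by
      have : v t ((φ ∘ β) t) = F (φ (β t)) (s (β t)) (w t) := by
        simp [hv_def, hceq t htI, Function.comp]
      rw [this, hweq t ht.1, hG_def]
      exact (ContinuousLinearMap.map_smul _ _ _).symm
    rw [hval] at hcomp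
    exact hcomp.mono_of_mem_nhdsWithin (Icc_mem_nhdsGE_of_mem ht)
  have hfc : ContinuousOn qβ (Icc 0 T) := hqβ.continuousOn.mono hIccsub
  have hgc : ContinuousOn (φ ∘ β) (Icc 0 T) := hφcont.comp hβcont (fun u hu => hab u hu)
  have heq : EqOn qβ (φ ∘ β) (Icc 0 T) :=
    ODE_solution_unique_of_mem_Icc_right (fun t _ => hv t) hfc hf' (fun _ _ => trivial)
      hgc hg' (fun _ _ => trivial) (by simp [Function.comp, hφ0])
  have := heq hTT
  rw [this]
  simp only [Function.comp]
  rw [hret, hφ0]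
end

section
/- (The displacement depends only on the endpoints of the reparameterization.) In the linear swimmer model with F additionally Lipschitz in its first argument (‖(F(q₁,s) − F(q₂,s))(v)‖ ≤ L‖q₁ − q₂‖‖s‖‖v‖ for some L > 0), let s : [0,∞) → S be C¹ and let β₁, β₂ : [0,∞) → [0,∞) be C¹ with β₁(0) = β₂(0). Let q₁ and q₂ be trajectories for the shape functions s ∘ β₁ and s ∘ β₂ respectively, with the same initial position q₁(0) = q₂(0). If T > 0 satisfies β₁(T) = β₂(T), then q₁(T) = q₂(T). -/
open Set

set_option maxHeartbeats 1000000 in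
/-- **The displacement depends only on the endpoints of the reparameterization.**
In the linear swimmer model, with `F` Lipschitz in its first argument, let `β₁, β₂` be
`C¹` reparameterizations `[0,∞) → [0,∞)` with `β₁(0) = β₂(0)`, and let `q₁, q₂` be
trajectories for the shape functions `s ∘ β₁` and `s ∘ β₂` with the same initial
position. If `β₁(T) = β₂(T)` for some `T > 0`, then `q₁(T) = q₂(T)`. -/
theorem displacement_depends_only_on_endpoints
    {S Q : Type*} [NormedAddCommGroup S] [NormedSpace ℝ S] [CompleteSpace S]
    [NormedAddCommGroup Q] [NormedSpace ℝ Q] [FiniteDimensional ℝ Q]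
    (F : Q → S → (S →L[ℝ] Q))
    (hFcont : Continuous fun p : Q × S => F p.1 p.2)
    (K L : ℝ) (hK : 0 < K) (hL : 0 < L)
    (hFbound : ∀ (q : Q) (s v : S), ‖F q s v‖ ≤ K * ‖s‖ * ‖v‖)
    (hFlip : ∀ (q₁ q₂ : Q) (s v : S),
      ‖F q₁ s v - F q₂ s v‖ ≤ L * ‖q₁ - q₂‖ * ‖s‖ * ‖v‖)
    (s : ℝ → S) (hs : ContDiffOn ℝ 1 s (Ici 0))
    (β₁ β₂ : ℝ → ℝ)
    (hβ₁ : ContDiffOn ℝ 1 β₁ (Ici 0)) (hβ₂ : ContDiffOn ℝ 1 β₂ (Ici 0))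
    (hβ₁pos : ∀ t ∈ Ici (0:ℝ), β₁ t ∈ Ici (0:ℝ))
    (hβ₂pos : ∀ t ∈ Ici (0:ℝ), β₂ t ∈ Ici (0:ℝ))
    (hβ0 : β₁ 0 = β₂ 0)
    (q₁ q₂ : ℝ → Q)
    (hq₁ : ContDiffOn ℝ 1 q₁ (Ici 0)) (hq₂ : ContDiffOn ℝ 1 q₂ (Ici 0))
    (hode₁ : ∀ t ∈ Ici (0:ℝ),
      derivWithin q₁ (Ici 0) t = F (q₁ t) ((s ∘ β₁) t) (derivWithin (s ∘ β₁) (Ici 0) t))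
    (hode₂ : ∀ t ∈ Ici (0:ℝ),
      derivWithin q₂ (Ici 0) t = F (q₂ t) ((s ∘ β₂) t) (derivWithin (s ∘ β₂) (Ici 0) t))
    (hinit : q₁ 0 = q₂ 0)
    (T : ℝ) (hT : 0 < T) (hend : β₁ T = β₂ T) :
    q₁ T = q₂ T := by
  classical
  have hT0 : (0:ℝ) ≤ T := hT.le
  set τ₀ := β₁ 0 with hτ₀def
  have hτ₀ : (0:ℝ) ≤ τ₀ := hβ₁pos 0 self_mem_Ici
  -- bound the reparameterizations on [0, T]
  obtain ⟨M₁, hM₁⟩ := isCompact_Icc.exists_bound_of_continuousOn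
    (hβ₁.continuousOn.mono (Icc_subset_Ici_self (b := (0:ℝ)) (a := T)))
  obtain ⟨M₂, hM₂⟩ := isCompact_Icc.exists_bound_of_continuousOn
    (hβ₂.continuousOn.mono (Icc_subset_Ici_self (b := (0:ℝ)) (a := T)))
  set M : ℝ := max M₁ M₂ with hMdef
  have hβ₁M : ∀ t ∈ Icc (0:ℝ) T, β₁ t ≤ M := fun t ht =>
    le_trans (le_trans (le_abs_self _) (hM₁ t ht)) (le_max_left _ _)
  have hβ₂M : ∀ t ∈ Icc (0:ℝ) T, β₂ t ≤ M := fun t ht =>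
    le_trans (le_trans (le_abs_self _) (hM₂ t ht)) (le_max_right _ _)
  have hM0 : (0:ℝ) ≤ M := le_trans hτ₀ (hβ₁M 0 ⟨le_rfl, hT0⟩)
  have hτ₀M : τ₀ ∈ Icc (0:ℝ) M := ⟨hτ₀, hβ₁M 0 ⟨le_rfl, hT0⟩⟩
  -- the derivative of s within Ici 0
  set ds : ℝ → S := derivWithin s (Ici 0) with hdsdef
  have hds_cont : ContinuousOn ds (Ici 0) :=
    hs.continuousOn_derivWithin (uniqueDiffOn_Ici 0) le_rfl
  -- bounds on s and ds over [0, M]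
  obtain ⟨C₁', hC₁'⟩ := isCompact_Icc.exists_bound_of_continuousOn
    (hs.continuousOn.mono (Icc_subset_Ici_self (b := (0:ℝ)) (a := M)))
  obtain ⟨C₂', hC₂'⟩ := isCompact_Icc.exists_bound_of_continuousOn
    (hds_cont.mono (Icc_subset_Ici_self (b := (0:ℝ)) (a := M)))
  set C₁ : ℝ := max C₁' 0 with hC₁def
  set C₂ : ℝ := max C₂' 0 with hC₂def
  have hC₁0 : (0:ℝ) ≤ C₁ := le_max_right _ _
  have hC₂0 : (0:ℝ) ≤ C₂ := le_max_right _ _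
  have hC₁ : ∀ τ ∈ Icc (0:ℝ) M, ‖s τ‖ ≤ C₁ := fun τ hτ =>
    le_trans (hC₁' τ hτ) (le_max_left _ _)
  have hC₂ : ∀ τ ∈ Icc (0:ℝ) M, ‖ds τ‖ ≤ C₂ := fun τ hτ =>
    le_trans (hC₂' τ hτ) (le_max_left _ _)
  -- the autonomous-in-shape-time vector field
  set f : ℝ → Q → Q := fun τ x => F x (s τ) (ds τ) with hfdef
  set C : ℝ := K * C₁ * C₂ with hCdef
  have hC0 : 0 ≤ C := by positivity
  set R : ℝ := C * M + 1 with hRdef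
  have hR0 : (0:ℝ) ≤ R := by positivity
  set Lip : NNReal := Real.toNNReal (L * C₁ * C₂) with hLipdef
  have hPL : IsPicardLindelof f (tmin := 0) (tmax := M) ⟨τ₀, hτ₀M⟩ (q₁ 0) ⟨R, hR0⟩ 0 ⟨C, hC0⟩ Lip := by
    constructor
    · intro τ hτ
      apply LipschitzOnWith.of_dist_le' (K := L * C₁ * C₂)
      intro x _ y _
      rw [dist_eq_norm, dist_eq_norm]
      calc ‖f τ x - f τ y‖ ≤ L * ‖x - y‖ * ‖s τ‖ * ‖ds τ‖ := hFlip x y (s τ) (ds τ)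
        _ ≤ L * ‖x - y‖ * C₁ * C₂ := by
            have h1 := hC₁ τ hτ; have h2 := hC₂ τ hτ
            gcongr <;> positivity
        _ = L * C₁ * C₂ * ‖x - y‖ := by ring
    · intro x _
      have h1 : ContinuousOn (fun τ : ℝ => F x (s τ)) (Icc 0 M) := by
        have : Continuous (fun σ : S => F x σ) := by
          have := hFcont.comp (continuous_const.prodMk continuous_id : Continuous fun σ : S => ((x, σ) : Q × S))
          exact this
        exact this.comp_continuousOn (hs.continuousOn.mono Icc_subset_Ici_self)
      exact h1.clm_apply (hds_cont.mono Icc_subset_Ici_self)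
    · intro τ hτ x _
      calc ‖f τ x‖ ≤ K * ‖s τ‖ * ‖ds τ‖ := hFbound x (s τ) (ds τ)
        _ ≤ K * C₁ * C₂ := by
            have h1 := hC₁ τ hτ; have h2 := hC₂ τ hτ
            gcongr <;> positivity
    · show C * max (M - τ₀) (τ₀ - 0) ≤ R - 0
      rw [show R - 0 = R from sub_zero R]
      have hmax : max (M - τ₀) (τ₀ - 0) ≤ M := by
        apply max_le <;> [linarith [hτ₀]; linarith [hτ₀M.2]]
      calc C * max (M - τ₀) (τ₀ - 0) ≤ C * M := by
            apply mul_le_mul_of_nonneg_left hmax hC0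
        _ ≤ R := by rw [hRdef]; linarith
  obtain ⟨Φ, hΦ0, hΦ⟩ := hPL.exists_eq_forall_mem_Icc_hasDerivWithinAt₀
  have hΦcont : ContinuousOn Φ (Icc 0 M) := fun τ hτ => (hΦ τ hτ).continuousWithinAt
  -- key claim: any trajectory is Φ ∘ β
  have key : ∀ (β : ℝ → ℝ) (q : ℝ → Q), ContDiffOn ℝ 1 β (Ici 0) →
      (∀ t ∈ Ici (0:ℝ), β t ∈ Ici (0:ℝ)) →
      ContDiffOn ℝ 1 q (Ici 0) →
      (∀ t ∈ Ici (0:ℝ),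
        derivWithin q (Ici 0) t = F (q t) ((s ∘ β) t) (derivWithin (s ∘ β) (Ici 0) t)) →
      (∀ t ∈ Icc (0:ℝ) T, β t ≤ M) → β 0 = τ₀ → q 0 = q₁ 0 → q T = Φ (β T) := by
    intro β q hβ hβpos hq hode hβM hβz hqz
    set w : ℝ → S := derivWithin (s ∘ β) (Ici 0) with hwdef
    have hsβ : ContDiffOn ℝ 1 (s ∘ β) (Ici 0) := hs.comp hβ (fun t ht => hβpos t ht)
    have hw_cont : ContinuousOn w (Ici 0) :=
      hsβ.continuousOn_derivWithin (uniqueDiffOn_Ici 0) le_rfl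
    obtain ⟨C₃', hC₃'⟩ := isCompact_Icc.exists_bound_of_continuousOn
      (hw_cont.mono (Icc_subset_Ici_self (b := (0:ℝ)) (a := T)))
    set C₃ : ℝ := max C₃' 0 with hC₃def
    have hC₃0 : (0:ℝ) ≤ C₃ := le_max_right _ _
    have hC₃ : ∀ t ∈ Icc (0:ℝ) T, ‖w t‖ ≤ C₃ := fun t ht =>
      le_trans (hC₃' t ht) (le_max_left _ _)
    -- clamp
    set c : ℝ → ℝ := fun t => min T (max t 0) with hcdef
    have hc_mem : ∀ t, c t ∈ Icc (0:ℝ) T := fun t =>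
      ⟨le_min hT0 (le_max_right _ _), min_le_left _ _⟩
    have hct : ∀ t ∈ Icc (0:ℝ) T, c t = t := by
      intro t ht
      simp only [hcdef]
      rw [max_eq_left ht.1, min_eq_right ht.2]
    set v : ℝ → Q → Q := fun t x => F x (s (β (c t))) (w (c t)) with hvdef
    have hβcM : ∀ t, β (c t) ∈ Icc (0:ℝ) M := fun t =>
      ⟨hβpos _ (hc_mem t).1, hβM _ (hc_mem t)⟩
    have hvlip : ∀ t, LipschitzWith (Real.toNNReal (L * C₁ * C₃)) (v t) := by
      intro t
      apply LipschitzWith.of_dist_le' (K := L * C₁ * C₃)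
      intro x y
      rw [dist_eq_norm, dist_eq_norm]
      calc ‖v t x - v t y‖ ≤ L * ‖x - y‖ * ‖s (β (c t))‖ * ‖w (c t)‖ := hFlip _ _ _ _
        _ ≤ L * ‖x - y‖ * C₁ * C₃ := by
            have h1 := hC₁ _ (hβcM t)
            have h2 := hC₃ _ (hc_mem t)
            gcongr <;> positivity
        _ = L * C₁ * C₃ * ‖x - y‖ := by ring
    -- chain rule for w
    have hchain : ∀ t ∈ Ici (0:ℝ), w t = derivWithin β (Ici 0) t • ds (β t) := by
      intro t ht
      have hβd : HasDerivWithinAt β (derivWithin β (Ici 0) t) (Ici 0) t :=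
        (hβ.differentiableOn one_ne_zero t ht).hasDerivWithinAt
      have hsd : HasDerivWithinAt s (ds (β t)) (Ici 0) (β t) :=
        (hs.differentiableOn one_ne_zero (β t) (hβpos t ht)).hasDerivWithinAt
      have := HasDerivWithinAt.scomp (x := t) hsd hβd (fun u hu => hβpos u hu)
      exact this.derivWithin (uniqueDiffOn_Ici 0 t ht)
    have heq : EqOn q (Φ ∘ β) (Icc 0 T) := by
      apply ODE_solution_unique (v := v) hvlip
      · exact hq.continuousOn.mono Icc_subset_Ici_self
      · intro t ht
        have htI : t ∈ Ici (0:ℝ) := ht.1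
        have hd : HasDerivWithinAt q (derivWithin q (Ici 0) t) (Ici 0) t :=
          (hq.differentiableOn one_ne_zero t htI).hasDerivWithinAt
        have hval : derivWithin q (Ici 0) t = v t (q t) := by
          rw [hode t htI, hvdef]
          simp only [Function.comp_apply, hct t ⟨ht.1, ht.2.le⟩]
        rw [← hval]
        exact hd.mono (fun u hu => mem_Ici.2 (le_trans htI hu))
      · exact hΦcont.comp (hβ.continuousOn.mono Icc_subset_Ici_self)
          (fun t ht => ⟨hβpos t ht.1, hβM t ht⟩)
      · intro t ht
        have htI : t ∈ Ici (0:ℝ) := ht.1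
        have hβmem : MapsTo β (Icc t T) (Icc 0 M) := fun u hu =>
          ⟨hβpos u (le_trans ht.1 hu.1), hβM u ⟨le_trans ht.1 hu.1, hu.2⟩⟩
        have hβd : HasDerivWithinAt β (derivWithin β (Ici 0) t) (Icc t T) t :=
          ((hβ.differentiableOn one_ne_zero t htI).hasDerivWithinAt).mono
            (fun u hu => le_trans ht.1 hu.1)
        have hΦd : HasDerivWithinAt Φ (f (β t) (Φ (β t))) (Icc 0 M) (β t) :=
          hΦ (β t) ⟨hβpos t htI, hβM t ⟨ht.1, ht.2.le⟩⟩
        have hcomp : HasDerivWithinAt (Φ ∘ β)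
            (derivWithin β (Ici 0) t • f (β t) (Φ (β t))) (Icc t T) t :=
          HasDerivWithinAt.scomp (x := t) hΦd hβd hβmem
        have hup : HasDerivWithinAt (Φ ∘ β)
            (derivWithin β (Ici 0) t • f (β t) (Φ (β t))) (Ici t) t :=
          hcomp.mono_of_mem_nhdsWithin (Icc_mem_nhdsGE_of_mem ⟨le_rfl, ht.2⟩)
        have hval : derivWithin β (Ici 0) t • f (β t) (Φ (β t)) = v t ((Φ ∘ β) t) := by
          rw [hvdef]
          simp only [Function.comp_apply, hct t ⟨ht.1, ht.2.le⟩, hfdef]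
          rw [hchain t htI, ← (F (Φ (β t)) (s (β t))).map_smul]
        rw [← hval]
        exact hup
      · show q 0 = (Φ ∘ β) 0
        simp only [Function.comp_apply, hβz, hqz, hΦ0]
    have := heq ⟨hT0, le_rfl⟩
    simpa using this
  have h1 := key β₁ q₁ hβ₁ hβ₁pos hq₁ hode₁ hβ₁M rfl rfl
  have h2 := key β₂ q₂ hβ₂ hβ₂pos hq₂ hode₂ hβ₂M hβ0.symm hinit.symm
  rw [h1, h2, hend]
end

section
/- (Generalized scallop theorem, simply connected case.) In the linear swimmer model, let s : [0,∞) → S be C¹ with shape path of finite length, i.e. ∫₀^∞ ‖s'(u)‖ du < ∞. Then every trajectory q : [0,∞) → Q for s is bounded: there exists R > 0 such that ‖q(t) − q(0)‖ ≤ R for all t ≥ 0. In fact one may take R = K (‖s(0)‖ + ∫₀^∞ ‖s'(u)‖ du) · ∫₀^∞ ‖s'(u)‖ du. -/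
open Set MeasureTheory

lemma scallop_ftc_norm {E : Type*} [NormedAddCommGroup E] [NormedSpace ℝ E]
    [CompleteSpace E] (f : ℝ → E) (hf : ContDiffOn ℝ 1 f (Ici 0)) {t : ℝ}
    (ht : 0 ≤ t) :
    ‖f t - f 0‖ ≤ ∫ u in (0:ℝ)..t, ‖derivWithin f (Ici 0) u‖ := by
  have hderivcont : ContinuousOn (fun u => derivWithin f (Ici 0) u) (Ici 0) :=
    hf.continuousOn_derivWithin (uniqueDiffOn_Ici 0) le_rfl
  have hint : IntervalIntegrable (fun u => derivWithin f (Ici 0) u) volume 0 t :=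
    (hderivcont.mono (Icc_subset_Ici_self)).intervalIntegrable_of_Icc ht
  have heq : ∫ u in (0:ℝ)..t, derivWithin f (Ici 0) u = f t - f 0 := by
    apply intervalIntegral.integral_eq_sub_of_hasDeriv_right_of_le ht
    · exact (hf.continuousOn).mono Icc_subset_Ici_self
    · intro x hx
      have hd : HasDerivWithinAt f (derivWithin f (Ici 0) x) (Ici 0) x :=
        (hf.differentiableOn one_ne_zero x (le_of_lt hx.1)).hasDerivWithinAt
      exact hd.mono (fun y hy => le_of_lt (lt_trans hx.1 hy))
    · exact hint
  calc ‖f t - f 0‖ = ‖∫ u in (0:ℝ)..t, derivWithin f (Ici 0) u‖ := by rw [heq]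
    _ ≤ ∫ u in (0:ℝ)..t, ‖derivWithin f (Ici 0) u‖ :=
        intervalIntegral.norm_integral_le_integral_norm ht

/-- **Generalized scallop theorem, simply connected case.**
In the linear swimmer model, if the shape path has finite length, i.e.
`∫₀^∞ ‖s'(u)‖ du < ∞`, then every trajectory `q` for `s` is bounded, and in fact
`R = K (‖s(0)‖ + ∫₀^∞ ‖s'‖) ∫₀^∞ ‖s'‖` bounds the displacement. -/
theorem generalized_scallop_theorem_finite_length
    {S Q : Type*} [NormedAddCommGroup S] [NormedSpace ℝ S] [CompleteSpace S]
    [NormedAddCommGroup Q] [NormedSpace ℝ Q] [FiniteDimensional ℝ Q]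
    (F : Q → S → (S →L[ℝ] Q))
    (hFcont : Continuous fun p : Q × S => F p.1 p.2)
    (K : ℝ) (hK : 0 < K)
    (hFbound : ∀ (q : Q) (s v : S), ‖F q s v‖ ≤ K * ‖s‖ * ‖v‖)
    (s : ℝ → S) (hs : ContDiffOn ℝ 1 s (Ici 0))
    (hlen : IntegrableOn (fun u => ‖derivWithin s (Ici 0) u‖) (Ici 0))
    (q : ℝ → Q) (hq : ContDiffOn ℝ 1 q (Ici 0))
    (hode : ∀ t ∈ Ici (0:ℝ),
      derivWithin q (Ici 0) t = F (q t) (s t) (derivWithin s (Ici 0) t)) :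
    (∃ R : ℝ, 0 < R ∧ ∀ t ∈ Ici (0:ℝ), ‖q t - q 0‖ ≤ R) ∧
    (∀ t ∈ Ici (0:ℝ), ‖q t - q 0‖ ≤
      K * (‖s 0‖ + ∫ u in Ici (0:ℝ), ‖derivWithin s (Ici 0) u‖) *
        ∫ u in Ici (0:ℝ), ‖derivWithin s (Ici 0) u‖) := by
  set L : ℝ := ∫ u in Ici (0:ℝ), ‖derivWithin s (Ici 0) u‖ with hL
  have hLnn : 0 ≤ L := setIntegral_nonneg measurableSet_Ici (fun x _ => norm_nonneg _)
  have hsnorm_nonneg : ∀ u, 0 ≤ ‖derivWithin s (Ici 0) u‖ := fun u => norm_nonneg _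
  -- the interval integral of ‖s'‖ over [0,t] is at most L
  have hintL : ∀ t : ℝ, 0 ≤ t →
      (∫ u in (0:ℝ)..t, ‖derivWithin s (Ici 0) u‖) ≤ L := by
    intro t ht
    rw [intervalIntegral.integral_of_le ht]
    apply setIntegral_mono_set hlen
    · exact Filter.Eventually.of_forall fun u => norm_nonneg _
    · exact HasSubset.Subset.eventuallyLE (fun x hx => le_of_lt hx.1)
  -- ‖s u‖ is bounded by ‖s 0‖ + L on [0,∞)
  have hsbound : ∀ u : ℝ, 0 ≤ u → ‖s u‖ ≤ ‖s 0‖ + L := by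
    intro u hu
    have h1 := scallop_ftc_norm s hs hu
    have h2 := hintL u hu
    calc ‖s u‖ ≤ ‖s 0‖ + ‖s u - s 0‖ := by
          have := norm_add_le (s 0) (s u - s 0); simpa using this
      _ ≤ ‖s 0‖ + L := by linarith
  set C : ℝ := K * (‖s 0‖ + L) with hC
  have hCnn : 0 ≤ C := mul_nonneg hK.le (by positivity)
  have hsderivcont : ContinuousOn (fun u => derivWithin s (Ici 0) u) (Ici 0) :=
    hs.continuousOn_derivWithin (uniqueDiffOn_Ici 0) le_rfl
  have hqderivcont : ContinuousOn (fun u => derivWithin q (Ici 0) u) (Ici 0) :=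
    hq.continuousOn_derivWithin (uniqueDiffOn_Ici 0) le_rfl
  -- the main estimate
  have main : ∀ t ∈ Ici (0:ℝ), ‖q t - q 0‖ ≤ C * L := by
    intro t ht
    have ht : (0:ℝ) ≤ t := ht
    have h1 := scallop_ftc_norm q hq ht
    have hqint : IntervalIntegrable (fun u => ‖derivWithin q (Ici 0) u‖) volume 0 t :=
      ((hqderivcont.mono Icc_subset_Ici_self).norm).intervalIntegrable_of_Icc ht
    have hsint : IntervalIntegrable (fun u => C * ‖derivWithin s (Ici 0) u‖) volume 0 t :=
      (((hsderivcont.mono Icc_subset_Ici_self).norm).const_smul C).intervalIntegrable_of_Icc ht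
    have h2 : (∫ u in (0:ℝ)..t, ‖derivWithin q (Ici 0) u‖)
        ≤ ∫ u in (0:ℝ)..t, C * ‖derivWithin s (Ici 0) u‖ := by
      apply intervalIntegral.integral_mono_on ht hqint hsint
      intro u hu
      have hu0 : (0:ℝ) ≤ u := hu.1
      rw [hode u hu0]
      calc ‖F (q u) (s u) (derivWithin s (Ici 0) u)‖
          ≤ K * ‖s u‖ * ‖derivWithin s (Ici 0) u‖ := hFbound _ _ _
        _ ≤ K * (‖s 0‖ + L) * ‖derivWithin s (Ici 0) u‖ := by
            apply mul_le_mul_of_nonneg_right _ (norm_nonneg _)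
            exact mul_le_mul_of_nonneg_left (hsbound u hu0) hK.le
        _ = C * ‖derivWithin s (Ici 0) u‖ := rfl
    have h3 : (∫ u in (0:ℝ)..t, C * ‖derivWithin s (Ici 0) u‖)
        = C * ∫ u in (0:ℝ)..t, ‖derivWithin s (Ici 0) u‖ := by
      simp [intervalIntegral.integral_const_mul]
    have h4 := hintL t ht
    have : C * (∫ u in (0:ℝ)..t, ‖derivWithin s (Ici 0) u‖) ≤ C * L :=
      mul_le_mul_of_nonneg_left h4 hCnn
    linarith [h1, h2, h3.le, h3.ge]
  constructor
  · refine ⟨C * L + 1, by positivity, fun t ht => ?_⟩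
    linarith [main t ht]
  · exact main
end
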